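/- Let K be a compact Hausdorff space. Then C(K) embeds isomorphically into ℓ∞ (i.e., there is an injective bounded linear map from C(K) into ℓ∞ with closed range) if and only if C(K) embeds isometrically into ℓ∞ (i.e., there is a linear isometry from C(K) into ℓ∞). -/

import Mathlib

set_option maxHeartbeats 1000000
set_option synthInstance.maxHeartbeats 400000
set_option linter.unusedSectionVars false
set_option linter.unusedVariables false

noncomputable section

open Set Function

namespace Tal

/-- helper: sup of a scaled set of reals -/
lemma csSup_scale (c : ℝ) (hc : 0 ≤ c) (s : Set ℝ) (hne : s.Nonempty) (hbdd : BddAbove s) :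
    sSup ((fun y => c * y) '' s) = c * sSup s := by
  have himg : BddAbove ((fun y => c * y) '' s) := by
    obtain ⟨B, hB⟩ := hbdd
    exact ⟨c * B, by rintro y ⟨z, hz, rfl⟩; exact mul_le_mul_of_nonneg_left (hB hz) hc⟩
  rcases eq_or_lt_of_le hc with h0 | hpos
  · obtain ⟨a, ha⟩ := hne
    subst h0
    have himg0 : (fun y => (0:ℝ) * y) '' s = {0} := by
      apply Subset.antisymm
      · rintro y ⟨z, hz, rfl⟩; simp
      · rintro y hy; simp only [mem_singleton_iff] at hy
        exact ⟨a, ha, by simp [hy]⟩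
    rw [himg0, csSup_singleton, zero_mul]
  · apply le_antisymm
    · apply csSup_le (hne.image _)
      rintro y ⟨z, hz, rfl⟩
      exact mul_le_mul_of_nonneg_left (le_csSup hbdd hz) hc
    · rw [mul_comm, ← le_div_iff₀ hpos]
      apply csSup_le hne
      intro z hz
      rw [le_div_iff₀' hpos]
      exact le_csSup himg ⟨z, hz, rfl⟩

variable {K : Type*} [TopologicalSpace K] [CompactSpace K] [T2Space K]

/-- the set of continuous "bump" functions supported (set-theoretically) in `V` -/
def G (V : Set K) : Set C(K, ℝ) :=
  {g | (∀ x, 0 ≤ g x) ∧ (∀ x, g x ≤ 1) ∧ ∀ x, g x ≠ 0 → x ∈ V}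

lemma zero_mem_G (V : Set K) : (0 : C(K, ℝ)) ∈ G V :=
  ⟨fun x => le_rfl, fun x => by norm_num, fun x hx => absurd rfl hx⟩

lemma G_mono {V V' : Set K} (h : V ⊆ V') : G V ⊆ G V' :=
  fun g hg => ⟨hg.1, hg.2.1, fun x hx => h (hg.2.2 x hx)⟩

lemma sup_mem_G {V : Set K} {g₁ g₂ : C(K, ℝ)} (h₁ : g₁ ∈ G V) (h₂ : g₂ ∈ G V) :
    g₁ ⊔ g₂ ∈ G V := by
  refine ⟨fun x => ?_, fun x => ?_, fun x hx => ?_⟩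
  · simp only [ContinuousMap.sup_apply, le_sup_iff]; exact Or.inl (h₁.1 x)
  · simp only [ContinuousMap.sup_apply, sup_le_iff]; exact ⟨h₁.2.1 x, h₂.2.1 x⟩
  · simp only [ContinuousMap.sup_apply] at hx
    rcases max_choice (g₁ x) (g₂ x) with h | h <;> rw [h] at hx
    · exact h₁.2.2 x hx
    · exact h₂.2.2 x hx

/-- A positive "cone functional" on `C(K, ℝ)`: additive, positively homogeneous and monotone
on the nonnegative cone, with `Λ 1 ≤ M`. -/
structure Cone (Λ : C(K, ℝ) → ℝ) (M : ℝ) : Prop where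
  addC : ∀ f g : C(K, ℝ), 0 ≤ f → 0 ≤ g → Λ (f + g) = Λ f + Λ g
  smulC : ∀ (c : ℝ) (f : C(K, ℝ)), 0 ≤ c → 0 ≤ f → Λ (c • f) = c * Λ f
  monoC : ∀ f g : C(K, ℝ), 0 ≤ f → f ≤ g → Λ f ≤ Λ g
  oneC : Λ 1 ≤ M

namespace Cone

variable {Λ : C(K, ℝ) → ℝ} {M : ℝ}

lemma zeroC (h : Cone Λ M) : Λ 0 = 0 := by
  have := h.addC 0 0 le_rfl le_rfl
  simp only [add_zero] at this
  linarith

lemma nonnegC (h : Cone Λ M) {f : C(K, ℝ)} (hf : 0 ≤ f) : 0 ≤ Λ f := by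
  have := h.monoC 0 f le_rfl hf
  rwa [h.zeroC] at this

lemma le_M (h : Cone Λ M) {g : C(K, ℝ)} (hg0 : 0 ≤ g) (hg1 : g ≤ 1) : Λ g ≤ M :=
  le_trans (h.monoC g 1 hg0 hg1) h.oneC

end Cone

/-- pointwise truncation estimate -/
lemma trunc_abs {a b₁ b₂ : ℝ} (hb₁ : 0 ≤ b₁) (hb₂ : 0 ≤ b₂) (ha : |a| ≤ b₁ + b₂) :
    |a - max (min a b₁) (-b₁)| ≤ b₂ := by
  rcases abs_le.mp ha with ⟨h1, h2⟩
  rcases le_total a b₁ with h | h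
  · rcases le_total (-b₁) a with h' | h'
    · rw [min_eq_left h, max_eq_left h']
      simpa using hb₂
    · rw [min_eq_left h, max_eq_right h', abs_le]
      constructor <;> linarith
  · rw [min_eq_right h, max_eq_left (by linarith : -b₁ ≤ b₁), abs_le]
    constructor <;> linarith

variable {K₀ : Type*} [TopologicalSpace K₀] [CompactSpace K₀] [T2Space K₀]

/-- a linear functional with bound M ≥ 0 -/
structure LinBdd (φ : C(K₀, ℝ) → ℝ) (M : ℝ) : Prop where
  addL : ∀ f g : C(K₀, ℝ), φ (f + g) = φ f + φ g
  smulL : ∀ (c : ℝ) (f : C(K₀, ℝ)), φ (c • f) = c * φ f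
  bddL : ∀ f, |φ f| ≤ M * ‖f‖
  nonnegL : 0 ≤ M

namespace LinBdd

variable {φ : C(K₀, ℝ) → ℝ} {M : ℝ}

lemma zeroL (h : LinBdd φ M) : φ 0 = 0 := by
  have := h.smulL 0 0
  simpa using this

end LinBdd

/-- the "set of minorants" used to define the modulus -/
def S (f : C(K₀, ℝ)) : Set C(K₀, ℝ) := {g | ∀ x, |g x| ≤ f x}

lemma zero_mem_S {f : C(K₀, ℝ)} (hf : 0 ≤ f) : (0 : C(K₀, ℝ)) ∈ S f := by
  intro x
  simpa using (ContinuousMap.le_def.mp hf x)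

lemma norm_le_of_mem_S {f g : C(K₀, ℝ)} (hg : g ∈ S f) : ‖g‖ ≤ ‖f‖ := by
  rw [ContinuousMap.norm_le _ (norm_nonneg f)]
  intro x
  calc ‖g x‖ = |g x| := rfl
    _ ≤ f x := hg x
    _ ≤ |f x| := le_abs_self _
    _ ≤ ‖f‖ := ContinuousMap.norm_coe_le_norm f x

/-- the modulus of a functional, on the nonnegative cone -/
def qfun (φ : C(K₀, ℝ) → ℝ) (f : C(K₀, ℝ)) : ℝ := sSup (φ '' S f)

variable {φ : C(K₀, ℝ) → ℝ} {M : ℝ}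

lemma qfun_bddAbove (h : LinBdd φ M) (f : C(K₀, ℝ)) : BddAbove (φ '' S f) := by
  refine ⟨M * ‖f‖, ?_⟩
  rintro y ⟨g, hg, rfl⟩
  calc φ g ≤ |φ g| := le_abs_self _
    _ ≤ M * ‖g‖ := h.bddL g
    _ ≤ M * ‖f‖ := mul_le_mul_of_nonneg_left (norm_le_of_mem_S hg) h.nonnegL

lemma qfun_nonneg (h : LinBdd φ M) {f : C(K₀, ℝ)} (hf : 0 ≤ f) : 0 ≤ qfun φ f := by
  have hm : φ 0 ∈ φ '' S f := ⟨0, zero_mem_S hf, rfl⟩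
  have h2 := le_csSup (qfun_bddAbove h f) hm
  rwa [h.zeroL] at h2

lemma abs_le_qfun (h : LinBdd φ M) {f : C(K₀, ℝ)} (hf : 0 ≤ f) : |φ f| ≤ qfun φ f := by
  have hmem : f ∈ S f := fun x => by
    have hx : (0:ℝ) ≤ f x := by simpa using ContinuousMap.le_def.mp hf x
    rw [abs_of_nonneg hx]
  have hmem' : -f ∈ S f := fun x => by
    have hx : (0:ℝ) ≤ f x := by simpa using ContinuousMap.le_def.mp hf x
    rw [ContinuousMap.neg_apply, abs_of_nonpos (by linarith)]
    simp
  rcases abs_cases (φ f) with ⟨he, _⟩ | ⟨he, _⟩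
  · rw [he]; exact le_csSup (qfun_bddAbove h f) ⟨f, hmem, rfl⟩
  · rw [he]
    have hneg : φ (-f) = -φ f := by
      have := h.smulL (-1) f
      simpa using this
    rw [← hneg]
    exact le_csSup (qfun_bddAbove h f) ⟨-f, hmem', rfl⟩

lemma qfun_le (h : LinBdd φ M) (f : C(K₀, ℝ)) (hSne : (S f).Nonempty) :
    qfun φ f ≤ M * ‖f‖ := by
  apply csSup_le (Set.Nonempty.image _ hSne)
  rintro y ⟨g, hg, rfl⟩
  calc φ g ≤ |φ g| := le_abs_self _
    _ ≤ M * ‖g‖ := h.bddL g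
    _ ≤ M * ‖f‖ := mul_le_mul_of_nonneg_left (norm_le_of_mem_S hg) h.nonnegL

lemma qfun_mono (h : LinBdd φ M) {f f' : C(K₀, ℝ)} (hf : 0 ≤ f) (hff' : f ≤ f') :
    qfun φ f ≤ qfun φ f' := by
  apply csSup_le (Set.Nonempty.image _ ⟨0, zero_mem_S hf⟩)
  rintro y ⟨g, hg, rfl⟩
  refine le_csSup (qfun_bddAbove h f') ⟨g, fun x => ?_, rfl⟩
  exact le_trans (hg x) (ContinuousMap.le_def.mp hff' x)

lemma qfun_add (h : LinBdd φ M) {f₁ f₂ : C(K₀, ℝ)} (hf₁ : 0 ≤ f₁) (hf₂ : 0 ≤ f₂) :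
    qfun φ (f₁ + f₂) = qfun φ f₁ + qfun φ f₂ := by
  apply le_antisymm
  · apply csSup_le (Set.Nonempty.image _ ⟨0, zero_mem_S (by positivity)⟩)
    rintro y ⟨g, hg, rfl⟩
    set g₁ : C(K₀, ℝ) := (g ⊓ f₁) ⊔ (-f₁) with hg₁def
    have hg₁ : g₁ ∈ S f₁ := by
      intro x
      have h1 : (0:ℝ) ≤ f₁ x := by simpa using ContinuousMap.le_def.mp hf₁ x
      rw [abs_le]
      constructor
      · simp only [hg₁def, ContinuousMap.sup_apply, ContinuousMap.inf_apply,
          ContinuousMap.neg_apply, le_max_iff]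
        right; rfl
      · simp only [hg₁def, ContinuousMap.sup_apply, ContinuousMap.inf_apply,
          ContinuousMap.neg_apply, max_le_iff]
        exact ⟨min_le_right _ _, by linarith⟩
    have hg₂ : g - g₁ ∈ S f₂ := by
      intro x
      have h1 : (0:ℝ) ≤ f₁ x := by simpa using ContinuousMap.le_def.mp hf₁ x
      have h2 : (0:ℝ) ≤ f₂ x := by simpa using ContinuousMap.le_def.mp hf₂ x
      have h3 := hg x
      simp only [hg₁def, ContinuousMap.sub_apply, ContinuousMap.sup_apply,
        ContinuousMap.inf_apply, ContinuousMap.neg_apply]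
      exact trunc_abs h1 h2 (by simpa using h3)
    have hsplit : φ g = φ g₁ + φ (g - g₁) := by
      rw [← h.addL]
      congr 1
      abel
    rw [hsplit]
    have l1 : φ g₁ ≤ qfun φ f₁ := le_csSup (qfun_bddAbove h f₁) ⟨g₁, hg₁, rfl⟩
    have l2 : φ (g - g₁) ≤ qfun φ f₂ := le_csSup (qfun_bddAbove h f₂) ⟨g - g₁, hg₂, rfl⟩
    linarith
  · have key : ∀ g₁ ∈ S f₁, ∀ g₂ ∈ S f₂, φ g₁ + φ g₂ ≤ qfun φ (f₁ + f₂) := by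
      intro g₁ hg₁ g₂ hg₂
      rw [← h.addL]
      refine le_csSup (qfun_bddAbove h _) ⟨g₁ + g₂, fun x => ?_, rfl⟩
      calc |(g₁ + g₂) x| = |g₁ x + g₂ x| := rfl
        _ ≤ |g₁ x| + |g₂ x| := abs_add_le _ _
        _ ≤ f₁ x + f₂ x := add_le_add (hg₁ x) (hg₂ x)
        _ = (f₁ + f₂) x := rfl
    apply add_le_of_le_sub_right
    apply csSup_le (Set.Nonempty.image _ ⟨0, zero_mem_S hf₁⟩)
    rintro y ⟨g₁, hg₁, rfl⟩
    rw [le_sub_iff_add_le, add_comm]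
    apply add_le_of_le_sub_right
    apply csSup_le (Set.Nonempty.image _ ⟨0, zero_mem_S hf₂⟩)
    rintro y ⟨g₂, hg₂, rfl⟩
    rw [le_sub_iff_add_le, add_comm]
    exact key g₁ hg₁ g₂ hg₂

lemma qfun_smul (h : LinBdd φ M) {c : ℝ} {f : C(K₀, ℝ)} (hc : 0 ≤ c) (hf : 0 ≤ f) :
    qfun φ (c • f) = c * qfun φ f := by
  rcases eq_or_lt_of_le hc with h0 | hpos
  · subst h0
    simp only [zero_smul, zero_mul]
    have hS0 : S (0 : C(K₀, ℝ)) = {0} := by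
      apply Subset.antisymm
      · intro g hg
        simp only [mem_singleton_iff]
        ext x
        have := hg x
        simp only [ContinuousMap.zero_apply] at this ⊢
        exact abs_nonpos_iff.mp (by simpa using this)
      · intro g hg
        simp only [mem_singleton_iff] at hg
        subst hg
        intro x; simp
    rw [qfun, hS0, image_singleton, h.zeroL, csSup_singleton]
  · have himage : φ '' S (c • f) = (fun y => c * y) '' (φ '' S f) := by
      apply Subset.antisymm
      · rintro y ⟨g, hg, rfl⟩
        have hmem : c⁻¹ • g ∈ S f := by
          intro x
          have hx := hg x
          simp only [ContinuousMap.smul_apply, smul_eq_mul] at hx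
          simp only [ContinuousMap.smul_apply, smul_eq_mul, abs_mul,
            abs_of_nonneg (inv_pos.mpr hpos).le]
          rw [inv_mul_le_iff₀ hpos]
          calc |g x| ≤ (c • f) x := hx
            _ = c * f x := rfl
        refine ⟨φ (c⁻¹ • g), mem_image_of_mem _ hmem, ?_⟩
        have hkey : φ (c • c⁻¹ • g) = c * φ (c⁻¹ • g) := h.smulL c _
        rw [smul_smul, mul_inv_cancel₀ (ne_of_gt hpos), one_smul] at hkey
        exact hkey.symm
      · rintro y ⟨z, ⟨g, hg, rfl⟩, rfl⟩
        refine ⟨c • g, fun x => ?_, h.smulL c g⟩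
        calc |(c • g) x| = c * |g x| := by
              simp [ContinuousMap.smul_apply, abs_mul, abs_of_nonneg hc]
          _ ≤ c * f x := mul_le_mul_of_nonneg_left (hg x) hc
          _ = (c • f) x := rfl
    show sSup (φ '' S (c • f)) = c * sSup (φ '' S f)
    rw [himage, csSup_scale c hc _ ⟨φ 0, mem_image_of_mem _ (zero_mem_S hf)⟩
      (qfun_bddAbove h f)]

lemma qfun_cone (h : LinBdd φ M) : Cone (qfun φ) M where
  addC := fun f g hf hg => qfun_add h hf hg
  smulC := fun c f hc hf => qfun_smul h hc hf
  monoC := fun f g hf hfg => qfun_mono h hf hfg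
  oneC := by
    have h1 : qfun φ 1 ≤ M * ‖(1 : C(K₀, ℝ))‖ :=
      qfun_le h 1 ⟨0, zero_mem_S (by intro x; simp)⟩
    have h2 : ‖(1 : C(K₀, ℝ))‖ ≤ 1 := by
      rw [ContinuousMap.norm_le _ (by norm_num)]
      intro x; simp
    nlinarith [h.nonnegL]

section Rfun

/-- restriction of a cone functional to an open set, on the nonnegative cone -/
def rfun (Λ : C(K₀, ℝ) → ℝ) (W : Set K₀) (f : C(K₀, ℝ)) : ℝ :=
  sSup ((fun g => Λ (f * g)) '' G W)

variable {Λ : C(K₀, ℝ) → ℝ} {M : ℝ} {W : Set K₀}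

lemma mul_mem_nonneg {f g : C(K₀, ℝ)} (hf : 0 ≤ f) (hg : g ∈ G W) : 0 ≤ f * g := by
  rw [ContinuousMap.le_def]
  intro x
  have h1 : (0:ℝ) ≤ f x := by simpa using ContinuousMap.le_def.mp hf x
  have h2 : (0:ℝ) ≤ f x * g x := mul_nonneg h1 (hg.1 x)
  simpa using h2

lemma rfun_bddAbove (hΛ : Cone Λ M) {f : C(K₀, ℝ)} (hf : 0 ≤ f) :
    BddAbove ((fun g => Λ (f * g)) '' G W) := by
  refine ⟨M * ‖f‖, ?_⟩
  rintro y ⟨g, hg, rfl⟩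
  have step : f * g ≤ ‖f‖ • (1 : C(K₀, ℝ)) := by
    rw [ContinuousMap.le_def]
    intro x
    show (f * g) x ≤ (‖f‖ • (1 : C(K₀, ℝ))) x
    have h0 : (0:ℝ) ≤ f x := by simpa using ContinuousMap.le_def.mp hf x
    have hr : (‖f‖ • (1 : C(K₀, ℝ))) x = ‖f‖ := by simp
    rw [hr, ContinuousMap.mul_apply]
    calc f x * g x ≤ f x * 1 := mul_le_mul_of_nonneg_left (hg.2.1 x) h0
      _ = f x := mul_one _
      _ ≤ |f x| := le_abs_self _
      _ ≤ ‖f‖ := ContinuousMap.norm_coe_le_norm f x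
  calc Λ (f * g) ≤ Λ (‖f‖ • (1 : C(K₀, ℝ))) := hΛ.monoC _ _ (mul_mem_nonneg hf hg) step
    _ = ‖f‖ * Λ 1 := hΛ.smulC _ _ (norm_nonneg f) (by intro x; simp)
    _ ≤ ‖f‖ * M := by
        have := hΛ.oneC
        have h2 : (0:ℝ) ≤ Λ 1 := hΛ.nonnegC (by intro x; simp)
        nlinarith [norm_nonneg f]
    _ = M * ‖f‖ := mul_comm _ _

lemma rfun_nonneg (hΛ : Cone Λ M) {f : C(K₀, ℝ)} (hf : 0 ≤ f) : 0 ≤ rfun Λ W f := by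
  have hm : Λ (f * 0) ∈ (fun g => Λ (f * g)) '' G W := ⟨0, zero_mem_G W, rfl⟩
  have := le_csSup (rfun_bddAbove hΛ hf) hm
  rwa [mul_zero, hΛ.zeroC] at this

lemma rfun_mono (hΛ : Cone Λ M) {f f' : C(K₀, ℝ)} (hf : 0 ≤ f) (hff' : f ≤ f') :
    rfun Λ W f ≤ rfun Λ W f' := by
  apply csSup_le (Set.Nonempty.image _ ⟨0, zero_mem_G W⟩)
  rintro y ⟨g, hg, rfl⟩
  have hmul : f * g ≤ f' * g := by
    intro x
    simp only [ContinuousMap.mul_apply]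
    exact mul_le_mul_of_nonneg_right (ContinuousMap.le_def.mp hff' x) (hg.1 x)
  calc Λ (f * g) ≤ Λ (f' * g) := hΛ.monoC _ _ (mul_mem_nonneg hf hg) hmul
    _ ≤ rfun Λ W f' := le_csSup (rfun_bddAbove hΛ (le_trans hf hff')) ⟨g, hg, rfl⟩

lemma rfun_le_elem (hΛ : Cone Λ M) {f : C(K₀, ℝ)} (hf : 0 ≤ f) {g : C(K₀, ℝ)}
    (hg : g ∈ G W) : Λ (f * g) ≤ rfun Λ W f :=
  le_csSup (rfun_bddAbove hΛ hf) ⟨g, hg, rfl⟩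

lemma rfun_one_elem (hΛ : Cone Λ M) {g : C(K₀, ℝ)} (hg : g ∈ G W) :
    Λ g ≤ rfun Λ W 1 := by
  have := rfun_le_elem (W := W) hΛ (f := 1) (by intro x; simp) hg
  rwa [one_mul] at this

lemma rfun_le_norm_mul (hΛ : Cone Λ M) {f : C(K₀, ℝ)} (hf : 0 ≤ f) :
    rfun Λ W f ≤ ‖f‖ * rfun Λ W 1 := by
  apply csSup_le (Set.Nonempty.image _ ⟨0, zero_mem_G W⟩)
  rintro y ⟨g, hg, rfl⟩
  have step : f * g ≤ ‖f‖ • g := by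
    intro x
    simp only [ContinuousMap.mul_apply, ContinuousMap.smul_apply, smul_eq_mul]
    have h0 : (0:ℝ) ≤ g x := hg.1 x
    have h1 : f x ≤ ‖f‖ := le_trans (le_abs_self _) (ContinuousMap.norm_coe_le_norm f x)
    exact mul_le_mul_of_nonneg_right h1 h0
  have hgnn : (0:C(K₀,ℝ)) ≤ g := by intro x; simpa using hg.1 x
  calc Λ (f * g) ≤ Λ (‖f‖ • g) := hΛ.monoC _ _ (mul_mem_nonneg hf hg) step
    _ = ‖f‖ * Λ g := hΛ.smulC _ _ (norm_nonneg f) hgnn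
    _ ≤ ‖f‖ * rfun Λ W 1 :=
        mul_le_mul_of_nonneg_left (rfun_one_elem hΛ hg) (norm_nonneg f)

lemma rfun_add (hΛ : Cone Λ M) {f₁ f₂ : C(K₀, ℝ)} (hf₁ : 0 ≤ f₁) (hf₂ : 0 ≤ f₂) :
    rfun Λ W (f₁ + f₂) = rfun Λ W f₁ + rfun Λ W f₂ := by
  have hsum : (0:C(K₀,ℝ)) ≤ f₁ + f₂ := by positivity
  apply le_antisymm
  · apply csSup_le (Set.Nonempty.image _ ⟨0, zero_mem_G W⟩)
    rintro y ⟨g, hg, rfl⟩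
    show Λ ((f₁ + f₂) * g) ≤ rfun Λ W f₁ + rfun Λ W f₂
    have hdist : (f₁ + f₂) * g = f₁ * g + f₂ * g := add_mul _ _ _
    rw [hdist, hΛ.addC _ _ (mul_mem_nonneg hf₁ hg) (mul_mem_nonneg hf₂ hg)]
    exact add_le_add (rfun_le_elem hΛ hf₁ hg) (rfun_le_elem hΛ hf₂ hg)
  · have key : ∀ g₁ ∈ G W, ∀ g₂ ∈ G W,
        Λ (f₁ * g₁) + Λ (f₂ * g₂) ≤ rfun Λ W (f₁ + f₂) := by
      intro g₁ hg₁ g₂ hg₂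
      have hgs := sup_mem_G hg₁ hg₂
      have m₁ : f₁ * g₁ ≤ f₁ * (g₁ ⊔ g₂) := by
        intro x
        simp only [ContinuousMap.mul_apply, ContinuousMap.sup_apply]
        have h0 : (0:ℝ) ≤ f₁ x := by simpa using ContinuousMap.le_def.mp hf₁ x
        exact mul_le_mul_of_nonneg_left (le_max_left _ _) h0
      have m₂ : f₂ * g₂ ≤ f₂ * (g₁ ⊔ g₂) := by
        intro x
        simp only [ContinuousMap.mul_apply, ContinuousMap.sup_apply]
        have h0 : (0:ℝ) ≤ f₂ x := by simpa using ContinuousMap.le_def.mp hf₂ x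
        exact mul_le_mul_of_nonneg_left (le_max_right _ _) h0
      calc Λ (f₁ * g₁) + Λ (f₂ * g₂)
          ≤ Λ (f₁ * (g₁ ⊔ g₂)) + Λ (f₂ * (g₁ ⊔ g₂)) :=
            add_le_add (hΛ.monoC _ _ (mul_mem_nonneg hf₁ hg₁) m₁)
              (hΛ.monoC _ _ (mul_mem_nonneg hf₂ hg₂) m₂)
        _ = Λ ((f₁ + f₂) * (g₁ ⊔ g₂)) := by
            rw [add_mul, hΛ.addC _ _ (mul_mem_nonneg hf₁ hgs) (mul_mem_nonneg hf₂ hgs)]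
        _ ≤ rfun Λ W (f₁ + f₂) := rfun_le_elem hΛ hsum hgs
    apply add_le_of_le_sub_right
    apply csSup_le (Set.Nonempty.image _ ⟨0, zero_mem_G W⟩)
    rintro y ⟨g₁, hg₁, rfl⟩
    rw [le_sub_iff_add_le, add_comm]
    apply add_le_of_le_sub_right
    apply csSup_le (Set.Nonempty.image _ ⟨0, zero_mem_G W⟩)
    rintro y ⟨g₂, hg₂, rfl⟩
    rw [le_sub_iff_add_le, add_comm]
    exact key g₁ hg₁ g₂ hg₂

lemma rfun_smul (hΛ : Cone Λ M) {c : ℝ} {f : C(K₀, ℝ)} (hc : 0 ≤ c) (hf : 0 ≤ f) :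
    rfun Λ W (c • f) = c * rfun Λ W f := by
  have himage : (fun g => Λ ((c • f) * g)) '' G W
      = (fun y => c * y) '' ((fun g => Λ (f * g)) '' G W) := by
    rw [image_image]
    apply image_congr
    intro g hg
    rw [smul_mul_assoc, hΛ.smulC _ _ hc (mul_mem_nonneg hf hg)]
  rw [rfun, himage, csSup_scale c hc _ (Set.Nonempty.image _ ⟨0, zero_mem_G W⟩)
    (rfun_bddAbove hΛ hf)]
  rfl

end Rfun

section Ext

/-- linearization of a cone functional -/
def ext (p : C(K₀, ℝ) → ℝ) : C(K₀, ℝ) → ℝ := fun f => p (f ⊔ 0) - p ((-f) ⊔ 0)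

variable {p : C(K₀, ℝ) → ℝ}

lemma posPart_nonneg (f : C(K₀, ℝ)) : 0 ≤ f ⊔ 0 := le_sup_right

lemma ext_of_nonneg (hp0 : p 0 = 0) {f : C(K₀, ℝ)} (hf : 0 ≤ f) : ext p f = p f := by
  have h1 : f ⊔ 0 = f := sup_eq_left.mpr hf
  have h2 : (-f) ⊔ 0 = 0 := sup_eq_right.mpr (by simpa using hf)
  rw [ext, h1, h2, hp0, sub_zero]

lemma ext_add (hpadd : ∀ f g : C(K₀, ℝ), 0 ≤ f → 0 ≤ g → p (f + g) = p f + p g)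
    (a b : C(K₀, ℝ)) : ext p (a + b) = ext p a + ext p b := by
  have key : ((a + b) ⊔ 0) + ((-a) ⊔ 0) + ((-b) ⊔ 0)
      = ((-(a + b)) ⊔ 0) + (a ⊔ 0) + (b ⊔ 0) := by
    ext x
    simp only [ContinuousMap.add_apply, ContinuousMap.sup_apply, ContinuousMap.neg_apply,
      ContinuousMap.zero_apply]
    have e1 := max_zero_sub_max_neg_zero_eq_self (a x + b x)
    have e2 := max_zero_sub_max_neg_zero_eq_self (a x)
    have e3 := max_zero_sub_max_neg_zero_eq_self (b x)
    linarith
  have expand : ∀ u v w : C(K₀, ℝ), 0 ≤ u → 0 ≤ v → 0 ≤ w →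
      p (u + v + w) = p u + p v + p w := by
    intro u v w hu hv hw
    rw [hpadd _ _ (by positivity) hw, hpadd _ _ hu hv]
  have lhs := expand _ _ _ (posPart_nonneg (a+b)) (posPart_nonneg (-a)) (posPart_nonneg (-b))
  have rhs := expand _ _ _ (posPart_nonneg (-(a+b))) (posPart_nonneg a) (posPart_nonneg b)
  rw [key] at lhs
  simp only [ext]
  have hneg : -(a + b) = -a + -b := by abel
  rw [← hneg] at *
  linarith [lhs, rhs]

lemma ext_smul (hpsmul : ∀ (c : ℝ) (f : C(K₀, ℝ)), 0 ≤ c → 0 ≤ f → p (c • f) = c * p f)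
    (c : ℝ) (f : C(K₀, ℝ)) : ext p (c • f) = c * ext p f := by
  have habs : ∀ (d : ℝ) (u : C(K₀, ℝ)), 0 ≤ d → (d • u) ⊔ 0 = d • (u ⊔ 0) := by
    intro d u hd
    ext x
    simp only [ContinuousMap.sup_apply, ContinuousMap.smul_apply, ContinuousMap.zero_apply,
      smul_eq_mul]
    rcases le_total (u x) 0 with h | h
    · rw [max_eq_right (by nlinarith), max_eq_right h, mul_zero]
    · rw [max_eq_left (by positivity), max_eq_left h]
  rcases le_total 0 c with hc | hc
  · have h1 : (c • f) ⊔ 0 = c • (f ⊔ 0) := habs c f hc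
    have h2 : (-(c • f)) ⊔ 0 = c • ((-f) ⊔ 0) := by
      rw [← smul_neg]; exact habs c (-f) hc
    rw [ext, h1, h2, hpsmul _ _ hc (posPart_nonneg f), hpsmul _ _ hc (posPart_nonneg (-f))]
    simp only [ext]
    ring
  · have hc' : 0 ≤ -c := by linarith
    have h1 : (c • f) ⊔ 0 = (-c) • ((-f) ⊔ 0) := by
      rw [← habs (-c) (-f) hc']; congr 1; ext x; simp
    have h2 : (-(c • f)) ⊔ 0 = (-c) • (f ⊔ 0) := by
      rw [← habs (-c) f hc']; congr 1; ext x; simp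
    rw [ext, h1, h2, hpsmul _ _ hc' (posPart_nonneg (-f)), hpsmul _ _ hc' (posPart_nonneg f)]
    simp only [ext]
    ring

end Ext

section Family

variable {Λ : ℕ → C(K₀, ℝ) → ℝ} {M c0 : ℝ}

lemma rfun_one_le_M {Λ₀ : C(K₀, ℝ) → ℝ} (hΛ : Cone Λ₀ M) (W : Set K₀) :
    rfun Λ₀ W 1 ≤ M := by
  apply csSup_le (Set.Nonempty.image _ ⟨0, zero_mem_G W⟩)
  rintro y ⟨g, hg, rfl⟩
  show Λ₀ (1 * g) ≤ M
  rw [one_mul]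
  exact hΛ.le_M (by intro x; simpa using hg.1 x) (by intro x; simpa using hg.2.1 x)

lemma rfun_one_mono {Λ₀ : C(K₀, ℝ) → ℝ} (hΛ : Cone Λ₀ M) {W W' : Set K₀} (h : W ⊆ W') :
    rfun Λ₀ W 1 ≤ rfun Λ₀ W' 1 := by
  apply csSup_le (Set.Nonempty.image _ ⟨0, zero_mem_G W⟩)
  rintro y ⟨g, hg, rfl⟩
  exact le_csSup (rfun_bddAbove hΛ (by intro x; simp)) ⟨g, G_mono h hg, rfl⟩

/-- supremum over the countable family of cone functionals -/
def mV (Λ : ℕ → C(K₀, ℝ) → ℝ) (V : Set K₀) : ℝ := ⨆ n, rfun (Λ n) V 1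

lemma mV_bddAbove (hΛ : ∀ n, Cone (Λ n) M) (V : Set K₀) :
    BddAbove (Set.range fun n => rfun (Λ n) V 1) :=
  ⟨M, by rintro y ⟨n, rfl⟩; exact rfun_one_le_M (hΛ n) V⟩

lemma mV_le_M (hΛ : ∀ n, Cone (Λ n) M) (V : Set K₀) : mV Λ V ≤ M :=
  ciSup_le fun n => rfun_one_le_M (hΛ n) V

lemma rfun_le_mV (hΛ : ∀ n, Cone (Λ n) M) (V : Set K₀) (n : ℕ) :
    rfun (Λ n) V 1 ≤ mV Λ V :=
  le_ciSup (mV_bddAbove hΛ V) n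

lemma mV_mono (hΛ : ∀ n, Cone (Λ n) M) {V V' : Set K₀} (h : V ⊆ V') :
    mV Λ V ≤ mV Λ V' :=
  ciSup_le fun n => le_trans (rfun_one_mono (hΛ n) h) (rfun_le_mV hΛ V' n)

/-- the nonempty open subsets of `V` -/
def opens (V : Set K₀) : Set (Set K₀) := {V' | IsOpen V' ∧ V'.Nonempty ∧ V' ⊆ V}

/-- infimum of `mV` over nonempty open subsets -/
def mhat (Λ : ℕ → C(K₀, ℝ) → ℝ) (V : Set K₀) : ℝ := sInf (mV Λ '' opens V)

section mhatLemmas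

variable (hΛ : ∀ n, Cone (Λ n) M)
  (hnorm : ∀ V : Set K₀, IsOpen V → V.Nonempty → c0 ≤ mV Λ V)

include hnorm

lemma mhat_bddBelow (V : Set K₀) : BddBelow (mV Λ '' opens V) := by
  refine ⟨c0, ?_⟩
  rintro y ⟨V', hV', rfl⟩
  exact hnorm V' hV'.1 hV'.2.1

lemma c0_le_mhat {V : Set K₀} (hV : IsOpen V) (hVne : V.Nonempty) : c0 ≤ mhat Λ V := by
  apply le_csInf (⟨mV Λ V, ⟨V, ⟨hV, hVne, Subset.rfl⟩, rfl⟩⟩ : (mV Λ '' opens V).Nonempty)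
  rintro y ⟨V', hV', rfl⟩
  exact hnorm V' hV'.1 hV'.2.1

lemma mhat_le_of_mem {V V' : Set K₀} (hV' : V' ∈ opens V) : mhat Λ V ≤ mV Λ V' :=
  csInf_le (mhat_bddBelow hnorm V) ⟨V', hV', rfl⟩

lemma mhat_le_mV {V : Set K₀} (hV : IsOpen V) (hVne : V.Nonempty) : mhat Λ V ≤ mV Λ V :=
  mhat_le_of_mem hnorm ⟨hV, hVne, Subset.rfl⟩

lemma mhat_antitone {V V₂ : Set K₀} (hV : IsOpen V) (hVne : V.Nonempty) (h : V ⊆ V₂) :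
    mhat Λ V₂ ≤ mhat Λ V := by
  apply csInf_le_csInf (mhat_bddBelow hnorm V₂) (⟨mV Λ V, ⟨V, ⟨hV, hVne, Subset.rfl⟩, rfl⟩⟩ : (mV Λ '' opens V).Nonempty)
  apply image_mono
  rintro V' ⟨h1, h2, h3⟩
  exact ⟨h1, h2, h3.trans h⟩

end mhatLemmas

/-- a `δ`-stable open set -/
def Stab (Λ : ℕ → C(K₀, ℝ) → ℝ) (δ : ℝ) (W : Set K₀) : Prop :=
  IsOpen W ∧ W.Nonempty ∧ mV Λ W ≤ mhat Λ W + δ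

lemma exists_stab (hnorm : ∀ V : Set K₀, IsOpen V → V.Nonempty → c0 ≤ mV Λ V)
    {δ : ℝ} (hδ : 0 < δ) {V : Set K₀} (hV : IsOpen V) (hVne : V.Nonempty) :
    ∃ W, W ⊆ V ∧ Stab Λ δ W := by
  have hlt : mhat Λ V < mhat Λ V + δ := by linarith
  obtain ⟨a, ⟨W, hW, rfl⟩, ha⟩ :=
    exists_lt_of_csInf_lt
      (Set.Nonempty.image _ (⟨V, ⟨hV, hVne, Subset.rfl⟩⟩ : (opens V).Nonempty)) hlt
  refine ⟨W, hW.2.2, hW.1, hW.2.1, ?_⟩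
  have h1 : mhat Λ V ≤ mhat Λ W := mhat_antitone hnorm hW.1 hW.2.1 hW.2.2
  linarith

lemma stab_bounds (hΛ : ∀ n, Cone (Λ n) M)
    (hnorm : ∀ V : Set K₀, IsOpen V → V.Nonempty → c0 ≤ mV Λ V)
    {δ : ℝ} {W : Set K₀} (hW : Stab Λ δ W) {V' : Set K₀} (hV' : V' ∈ opens W) :
    mhat Λ W ≤ mV Λ V' ∧ mV Λ V' ≤ mhat Λ W + δ :=
  ⟨mhat_le_of_mem hnorm hV', le_trans (mV_mono hΛ hV'.2.2) hW.2.2⟩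

lemma exists_maximal_family (hnorm : ∀ V : Set K₀, IsOpen V → V.Nonempty → c0 ≤ mV Λ V)
    {δ : ℝ} (hδ : 0 < δ) (hK : Nonempty K₀) :
    ∃ D : Set (Set K₀), (∀ W ∈ D, Stab Λ δ W) ∧ D.Pairwise Disjoint ∧
      ∀ U : Set K₀, IsOpen U → U.Nonempty → ∃ W ∈ D, (U ∩ W).Nonempty := by
  set 𝒮 : Set (Set (Set K₀)) :=
    {F | (∀ W ∈ F, Stab Λ δ W) ∧ F.Pairwise Disjoint} with h𝒮
  have hzorn : ∀ c ⊆ 𝒮, IsChain (· ⊆ ·) c → ∃ ub ∈ 𝒮, ∀ s ∈ c, s ⊆ ub := by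
    intro c hc hchain
    refine ⟨⋃₀ c, ⟨?_, ?_⟩, fun s hs => subset_sUnion_of_mem hs⟩
    · rintro W ⟨F, hF, hWF⟩
      exact ((hc hF).1 W hWF)
    · intro a ha b hb hab
      obtain ⟨F₁, hF₁, haF⟩ := ha
      obtain ⟨F₂, hF₂, hbF⟩ := hb
      rcases hchain.total hF₁ hF₂ with h | h
      · exact (hc hF₂).2 (h haF) hbF hab
      · exact (hc hF₁).2 haF (h hbF) hab
  obtain ⟨m, hm⟩ := zorn_subset 𝒮 hzorn
  refine ⟨m, hm.prop.1, hm.prop.2, ?_⟩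
  intro U hU hUne
  by_contra hcon
  push_neg at hcon
  obtain ⟨W0, hW0U, hW0⟩ := exists_stab hnorm hδ hU hUne
  have hdisj : ∀ W ∈ m, Disjoint U W := by
    intro W hW
    exact Set.disjoint_iff_inter_eq_empty.mpr (hcon W hW)
  have hmem : insert W0 m ∈ 𝒮 := by
    constructor
    · intro W hW
      rcases hW with rfl | hW
      · exact hW0
      · exact hm.prop.1 W hW
    · intro a ha b hb hab
      rcases ha with rfl | ha <;> rcases hb with rfl | hb
      · exact absurd rfl hab
      · exact Set.disjoint_of_subset_left hW0U ((hdisj b hb))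
      · exact (Set.disjoint_of_subset_left hW0U (hdisj a ha)).symm
      · exact hm.prop.2 ha hb hab
  have hW0m : W0 ∈ m := hm.mem_of_prop_insert hmem
  have hfin := hcon W0 hW0m
  rw [Set.inter_eq_right.mpr hW0U] at hfin
  exact hW0.2.1.ne_empty hfin

lemma cone_finset_sum {Λ₀ : C(K₀, ℝ) → ℝ} (hΛ : Cone Λ₀ M) {ι : Type*} (T : Finset ι)
    (f : ι → C(K₀, ℝ)) (hf : ∀ i ∈ T, 0 ≤ f i) :
    Λ₀ (∑ i ∈ T, f i) = ∑ i ∈ T, Λ₀ (f i) := by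
  classical
  induction T using Finset.induction_on with
  | empty => simpa using hΛ.zeroC
  | insert a T' hnotmem ih =>
    rw [Finset.sum_insert hnotmem, Finset.sum_insert hnotmem,
      hΛ.addC _ _ (hf a (Finset.mem_insert_self a T'))
        (Finset.sum_nonneg fun i hi => hf i (Finset.mem_insert_of_mem hi)),
      ih fun i hi => hf i (Finset.mem_insert_of_mem hi)]

lemma family_countable (hΛ : ∀ n, Cone (Λ n) M)
    (hnorm : ∀ V : Set K₀, IsOpen V → V.Nonempty → c0 ≤ mV Λ V) (hc0 : 0 < c0)
    {D : Set (Set K₀)} (hstab : ∀ W ∈ D, IsOpen W ∧ W.Nonempty)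
    (hdisj : D.Pairwise Disjoint) : D.Countable := by
  have hcover : D = ⋃ n, {W ∈ D | c0 / 2 < rfun (Λ n) W 1} := by
    apply Subset.antisymm
    · intro W hW
      have h1 : c0 ≤ mV Λ W := hnorm W (hstab W hW).1 (hstab W hW).2
      have h2 : c0 / 2 < mV Λ W := by linarith
      obtain ⟨n, hn⟩ := exists_lt_of_lt_ciSup h2
      exact Set.mem_iUnion.mpr ⟨n, hW, hn⟩
    · intro W hW
      obtain ⟨n, hn, _⟩ := Set.mem_iUnion.mp hW
      exact hn
  rw [hcover]
  apply Set.countable_iUnion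
  intro n
  apply Set.Finite.countable
  by_contra hinf
  rw [← Set.Infinite] at hinf
  set N : ℕ := Nat.floor (2 * M / c0) + 1 with hN
  obtain ⟨T, hTsub, hTcard⟩ := Set.Infinite.exists_subset_card_eq hinf N
  have hgW : ∀ W ∈ T, ∃ g ∈ G W, c0 / 2 < Λ n g := by
    intro W hW
    have h2 : c0 / 2 < rfun (Λ n) W 1 := (hTsub hW).2
    obtain ⟨a, ⟨g, hg, rfl⟩, ha⟩ :=
      exists_lt_of_lt_csSup (Set.Nonempty.image _ ⟨0, zero_mem_G W⟩) h2
    simp only [one_mul] at ha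
    exact ⟨g, hg, ha⟩
  classical
  choose gfun hgmem hglt using hgW
  have hsum_le_one : (∑ W ∈ T.attach, gfun W.1 W.2) ≤ 1 := by
    rw [ContinuousMap.le_def]
    intro x
    have happly : (∑ W ∈ T.attach, gfun W.1 W.2) x = ∑ W ∈ T.attach, gfun W.1 W.2 x := by
      simp
    rw [happly]
    by_cases hex : ∃ W : {W // W ∈ T}, W ∈ T.attach ∧ gfun W.1 W.2 x ≠ 0
    · obtain ⟨W₀, hW₀mem, hW₀⟩ := hex
      have hxW₀ : x ∈ W₀.1 := (hgmem W₀.1 W₀.2).2.2 x hW₀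
      have hzero : ∀ W ∈ T.attach, W ≠ W₀ → gfun W.1 W.2 x = 0 := by
        intro W _ hWne
        by_contra hne
        have hxW : x ∈ W.1 := (hgmem W.1 W.2).2.2 x hne
        have hD : Disjoint W.1 W₀.1 := by
          apply hdisj (hTsub W.2).1 (hTsub W₀.2).1
          intro hcontra
          exact hWne (Subtype.ext hcontra)
        exact (Set.disjoint_left.mp hD hxW) hxW₀
      rw [Finset.sum_eq_single_of_mem W₀ hW₀mem hzero]
      have := (hgmem W₀.1 W₀.2).2.1 x
      simpa using this
    · push_neg at hex
      have : ∀ W ∈ T.attach, gfun W.1 W.2 x = 0 := hex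
      rw [Finset.sum_eq_zero this]
      simp
  have hsum_nonneg : ∀ W ∈ T.attach, (0:C(K₀,ℝ)) ≤ gfun W.1 W.2 := by
    intro W _
    intro x
    simpa using (hgmem W.1 W.2).1 x
  have hbig : (N : ℝ) * (c0 / 2) ≤ M := by
    have h1 : ∑ W ∈ T.attach, Λ n (gfun W.1 W.2) ≤ Λ n 1 := by
      rw [← cone_finset_sum (hΛ n) T.attach _ hsum_nonneg]
      exact (hΛ n).monoC _ _ (Finset.sum_nonneg hsum_nonneg) hsum_le_one
    have h2 : (N : ℝ) * (c0 / 2) ≤ ∑ W ∈ T.attach, Λ n (gfun W.1 W.2) := by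
      have hcard : T.attach.card = N := by rw [Finset.card_attach, hTcard]
      have := Finset.card_nsmul_le_sum T.attach (fun W => Λ n (gfun W.1 W.2)) (c0/2)
        (fun W _ => le_of_lt (hglt W.1 W.2))
      rw [hcard] at this
      simpa [nsmul_eq_mul] using this
    linarith [(hΛ n).oneC]
  have hNbig : 2 * M / c0 < (N : ℝ) := by
    rw [hN]
    push_cast
    exact Nat.lt_floor_add_one _
  rw [div_lt_iff₀ hc0] at hNbig
  nlinarith

end Family

section MainEstimate

variable {Λ : ℕ → C(K₀, ℝ) → ℝ} {M c0 : ℝ}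

lemma main_estimate (hΛ : ∀ n, Cone (Λ n) M)
    (hnorm : ∀ V : Set K₀, IsOpen V → V.Nonempty → c0 ≤ mV Λ V) (hc0 : 0 < c0)
    {ε δ : ℝ} (hε : 0 < ε) (hε2 : ε ≤ 1/2) (hδ : δ = ε * c0 / 4)
    {D : Set (Set K₀)} (hDstab : ∀ W ∈ D, Stab Λ δ W)
    (hDint : ∀ U : Set K₀, IsOpen U → U.Nonempty → ∃ W ∈ D, (U ∩ W).Nonempty)
    {f : C(K₀, ℝ)} (hf1 : ‖f‖ = 1) {x0 : K₀} (hx0 : f x0 = 1) :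
    ∃ W ∈ D, ∃ n : ℕ, 0 < rfun (Λ n) W 1 ∧
      (1 - 2*ε) * rfun (Λ n) W 1 ≤ ext (rfun (Λ n) W) f := by
  have hδpos : 0 < δ := by rw [hδ]; positivity
  have hδc0 : δ ≤ c0 / 8 := by rw [hδ]; nlinarith
  -- the open set where f is close to its max
  set U : Set K₀ := f ⁻¹' (Set.Ioi (1 - ε)) with hUdef
  have hUopen : IsOpen U := f.continuous.isOpen_preimage _ isOpen_Ioi
  have hUne : U.Nonempty := ⟨x0, by simp [hUdef, hx0]; linarith⟩
  obtain ⟨W, hWD, hV'ne⟩ := hDint U hUopen hUne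
  have hWstab := hDstab W hWD
  set V' : Set K₀ := U ∩ W with hV'def
  have hV'open : IsOpen V' := hUopen.inter hWstab.1
  have hV'sub : V' ⊆ W := Set.inter_subset_right
  have hV'mem : V' ∈ opens W := ⟨hV'open, hV'ne, hV'sub⟩
  set s : ℝ := mhat Λ W with hsdef
  have hs_ge : c0 ≤ s := c0_le_mhat hnorm hWstab.1 hWstab.2.1
  obtain ⟨hlow, hup⟩ := stab_bounds hΛ hnorm hWstab hV'mem
  -- pick n with a large value on V'
  have hV'big : s - δ < mV Λ V' := by linarith
  obtain ⟨n, hn⟩ := exists_lt_of_lt_ciSup hV'big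
  have haW : rfun (Λ n) W 1 ≤ s + δ := le_trans (rfun_le_mV hΛ W n) hWstab.2.2
  -- pick a witness g0
  obtain ⟨a, ⟨g0, hg0V', rfl⟩, hg0big⟩ :=
    exists_lt_of_lt_csSup (Set.Nonempty.image _ ⟨0, zero_mem_G V'⟩) hn
  simp only [one_mul] at hg0big
  have hg0W : g0 ∈ G W := G_mono hV'sub hg0V'
  -- the square root of g0
  set g : C(K₀, ℝ) := ⟨fun x => Real.sqrt (g0 x), Real.continuous_sqrt.comp g0.continuous⟩
    with hgdef
  have hgapp : ∀ x, g x = Real.sqrt (g0 x) := fun x => rfl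
  have hgW : g ∈ G W := by
    refine ⟨fun x => Real.sqrt_nonneg _, fun x => ?_, fun x hx => ?_⟩
    · rw [hgapp]
      calc Real.sqrt (g0 x) ≤ Real.sqrt 1 := Real.sqrt_le_sqrt (hg0V'.2.1 x)
        _ = 1 := Real.sqrt_one
    · apply hg0W.2.2 x
      intro h0
      apply hx
      rw [hgapp, h0, Real.sqrt_zero]
  have hgsq : g * g = g0 := by
    ext x
    simp only [ContinuousMap.mul_apply, hgapp]
    exact Real.mul_self_sqrt (hg0V'.1 x)
  set r : C(K₀, ℝ) → ℝ := rfun (Λ n) W with hrdef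
  have hr1_le : r 1 ≤ s + δ := haW
  have hr1_ge : s - δ < r 1 := lt_of_lt_of_le hg0big (rfun_one_elem (hΛ n) hg0W)
  have hr1_pos : 0 < r 1 := by linarith
  set fp : C(K₀, ℝ) := f ⊔ 0 with hfpdef
  set fn : C(K₀, ℝ) := (-f) ⊔ 0 with hfndef
  have hfp_nonneg : 0 ≤ fp := posPart_nonneg f
  have hfn_nonneg : 0 ≤ fn := posPart_nonneg (-f)
  -- lower estimate on r fp
  have est1 : (1 - ε) * Λ n g0 ≤ r fp := by
    have hpoint : (1 - ε) • g0 ≤ fp * g0 := by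
      rw [ContinuousMap.le_def]
      intro x
      show ((1 - ε) • g0) x ≤ (fp * g0) x
      have hl : ((1 - ε) • g0) x = (1 - ε) * g0 x := rfl
      have hr : (fp * g0) x = max (f x) 0 * g0 x := rfl
      rw [hl, hr]
      by_cases h0 : g0 x = 0
      · rw [h0]; ring_nf; rfl
      · have hxU : x ∈ U := (Set.inter_subset_left : V' ⊆ U) (hg0V'.2.2 x h0)
        have hfx : 1 - ε < f x := by simpa [hUdef] using hxU
        have hg0pos : 0 < g0 x := lt_of_le_of_ne (hg0V'.1 x) (Ne.symm h0)
        have : 1 - ε ≤ max (f x) 0 := le_trans (le_of_lt hfx) (le_max_left _ _)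
        nlinarith
    have hsmul_nonneg : (0:C(K₀,ℝ)) ≤ (1 - ε) • g0 := by
      rw [ContinuousMap.le_def]
      intro x
      have : (0:ℝ) ≤ (1 - ε) * g0 x := mul_nonneg (by linarith) (hg0V'.1 x)
      simpa using this
    have hg0_nonneg : (0:C(K₀,ℝ)) ≤ g0 := by
      rw [ContinuousMap.le_def]; intro x; simpa using hg0V'.1 x
    calc (1 - ε) * Λ n g0 = Λ n ((1 - ε) • g0) :=
          ((hΛ n).smulC _ _ (by linarith) hg0_nonneg).symm
      _ ≤ Λ n (fp * g0) := (hΛ n).monoC _ _ hsmul_nonneg hpoint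
      _ ≤ r fp := rfun_le_elem (hΛ n) hfp_nonneg hg0W
  -- upper estimate on r fn
  have est2 : r fn ≤ 2 * δ := by
    have hfn_le : fn ≤ 1 - g := by
      rw [ContinuousMap.le_def]
      intro x
      show max (-f x) 0 ≤ (1 - g) x
      have hrr : (1 - g) x = 1 - Real.sqrt (g0 x) := by
        simp [ContinuousMap.sub_apply, hgapp]
      rw [hrr]
      by_cases h0 : g0 x = 0
      · rw [h0, Real.sqrt_zero, sub_zero]
        apply max_le _ (by norm_num)
        have : |f x| ≤ 1 := by
          rw [← hf1]; exact ContinuousMap.norm_coe_le_norm f x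
        linarith [abs_le.mp this]
      · have hxU : x ∈ U := (Set.inter_subset_left : V' ⊆ U) (hg0V'.2.2 x h0)
        have hfx : 1 - ε < f x := by simpa [hUdef] using hxU
        have hsq : Real.sqrt (g0 x) ≤ 1 := by
          calc Real.sqrt (g0 x) ≤ Real.sqrt 1 := Real.sqrt_le_sqrt (hg0V'.2.1 x)
            _ = 1 := Real.sqrt_one
        apply max_le _ (by linarith)
        have : 0 < f x := by linarith
        linarith
    have h1mg : (0:C(K₀,ℝ)) ≤ 1 - g := by
      rw [ContinuousMap.le_def]
      intro x
      have h1 : g x ≤ 1 := hgW.2.1 x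
      have : (0:ℝ) ≤ 1 - g x := by linarith
      simpa [ContinuousMap.sub_apply] using this
    have hsplit : r ((1 - g) + g) = r (1 - g) + r g := rfun_add (hΛ n) h1mg (by
      rw [ContinuousMap.le_def]; intro x; simpa using hgW.1 x)
    have hone : (1 - g) + g = 1 := by ext x; simp
    rw [hone] at hsplit
    have hrg : s - δ < r g := by
      have h1 : Λ n (g * g) ≤ r g := rfun_le_elem (hΛ n) (by
        rw [ContinuousMap.le_def]; intro x; simpa using hgW.1 x) hgW
      rw [hgsq] at h1
      linarith
    calc r fn ≤ r (1 - g) := rfun_mono (hΛ n) hfn_nonneg hfn_le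
      _ = r 1 - r g := by linarith
      _ ≤ (s + δ) - (s - δ) := by linarith
      _ = 2 * δ := by ring
  -- conclusion
  refine ⟨W, hWD, n, hr1_pos, ?_⟩
  have hext : ext r f = r fp - r fn := rfl
  have hchain : (1 - 2*ε) * r 1 ≤ (1 - ε) * (s - δ) - 2 * δ := by
    have h1 : (1 - 2*ε) * r 1 ≤ (1 - 2*ε) * (s + δ) :=
      mul_le_mul_of_nonneg_left hr1_le (by linarith)
    have h2 : (1 - 2*ε) * (s + δ) ≤ (1 - ε) * (s - δ) - 2 * δ := by nlinarith
    linarith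
  have hlast : (1 - ε) * (s - δ) - 2 * δ ≤ ext r f := by
    rw [hext]
    have : (1 - ε) * (s - δ) ≤ (1 - ε) * Λ n g0 :=
      mul_le_mul_of_nonneg_left (le_of_lt hg0big) (by linarith)
    linarith
  linarith

end MainEstimate

section Norming

variable {Λ : ℕ → C(K₀, ℝ) → ℝ} {M c0 : ℝ}

lemma norm_posPart_le (f : C(K₀, ℝ)) : ‖f ⊔ 0‖ ≤ ‖f‖ := by
  rw [ContinuousMap.norm_le _ (norm_nonneg f)]
  intro x
  have h1 : |f x| ≤ ‖f‖ := ContinuousMap.norm_coe_le_norm f x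
  rw [ContinuousMap.sup_apply, Real.norm_eq_abs, abs_le]
  constructor
  · have h2 : -‖f‖ ≤ 0 := by linarith [norm_nonneg f]
    exact le_trans h2 le_sup_right
  · exact sup_le (le_trans (le_abs_self _) h1) (norm_nonneg f)

lemma ext_abs_le {Λ₀ : C(K₀, ℝ) → ℝ} (hΛ : Cone Λ₀ M) (W : Set K₀) (f : C(K₀, ℝ)) :
    |ext (rfun Λ₀ W) f| ≤ ‖f‖ * rfun Λ₀ W 1 := by
  have h1 : rfun Λ₀ W (f ⊔ 0) ≤ ‖f‖ * rfun Λ₀ W 1 := by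
    calc rfun Λ₀ W (f ⊔ 0) ≤ ‖f ⊔ 0‖ * rfun Λ₀ W 1 :=
          rfun_le_norm_mul hΛ (posPart_nonneg f)
      _ ≤ ‖f‖ * rfun Λ₀ W 1 := by
          apply mul_le_mul_of_nonneg_right (norm_posPart_le f)
          exact rfun_nonneg hΛ (by intro x; simp)
  have h2 : rfun Λ₀ W ((-f) ⊔ 0) ≤ ‖f‖ * rfun Λ₀ W 1 := by
    calc rfun Λ₀ W ((-f) ⊔ 0) ≤ ‖(-f) ⊔ 0‖ * rfun Λ₀ W 1 :=
          rfun_le_norm_mul hΛ (posPart_nonneg (-f))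
      _ ≤ ‖f‖ * rfun Λ₀ W 1 := by
          apply mul_le_mul_of_nonneg_right
          · rw [← norm_neg f]; exact norm_posPart_le (-f)
          · exact rfun_nonneg hΛ (by intro x; simp)
  have h3 : 0 ≤ rfun Λ₀ W (f ⊔ 0) := rfun_nonneg hΛ (posPart_nonneg f)
  have h4 : 0 ≤ rfun Λ₀ W ((-f) ⊔ 0) := rfun_nonneg hΛ (posPart_nonneg (-f))
  rw [abs_le]
  constructor
  · simp only [ext]; linarith
  · simp only [ext]; linarith

lemma ext_zero {p : C(K₀, ℝ) → ℝ} : ext p 0 = 0 := by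
  simp [ext]

lemma exists_norming (hK : Nonempty K₀) (hΛ : ∀ n, Cone (Λ n) M)
    (hnorm : ∀ V : Set K₀, IsOpen V → V.Nonempty → c0 ≤ mV Λ V) (hc0 : 0 < c0) :
    ∃ e : ℕ → (C(K₀, ℝ) → ℝ), (∀ i, LinBdd (e i) 1) ∧
      ∀ f : C(K₀, ℝ), ∀ k : ℕ, ∃ i, (1 - 2 / ((k:ℝ) + 2)) * ‖f‖ ≤ e i f := by
  classical
  haveI : Nonempty K₀ := hK
  set ε : ℕ → ℝ := fun k => 1 / ((k:ℝ) + 2) with hεdef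
  have hεpos : ∀ k, 0 < ε k := fun k => by positivity
  have hεhalf : ∀ k, ε k ≤ 1/2 := by
    intro k
    rw [hεdef]
    simp only []
    rw [div_le_div_iff₀ (by positivity) (by norm_num)]
    have : (0:ℝ) ≤ (k:ℝ) := Nat.cast_nonneg k
    linarith
  set δ : ℕ → ℝ := fun k => ε k * c0 / 4 with hδdef
  have hδpos : ∀ k, 0 < δ k := fun k => by
    have := hεpos k; rw [hδdef]; positivity
  -- maximal families
  have hfam := fun k => exists_maximal_family (Λ := Λ) hnorm (hδpos k) hK
  choose Dfam hDfam using hfam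
  have hstab : ∀ k, ∀ W ∈ Dfam k, Stab Λ (δ k) W := fun k => (hDfam k).1
  have hdisj : ∀ k, (Dfam k).Pairwise Disjoint := fun k => (hDfam k).2.1
  have hint : ∀ k, ∀ U : Set K₀, IsOpen U → U.Nonempty → ∃ W ∈ Dfam k, (U ∩ W).Nonempty :=
    fun k => (hDfam k).2.2
  have hcount : ∀ k, (Dfam k).Countable := by
    intro k
    exact family_countable hΛ hnorm hc0
      (fun W hW => ⟨(hstab k W hW).1, (hstab k W hW).2.1⟩) (hdisj k)
  have hDne : ∀ k, (Dfam k).Nonempty := by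
    intro k
    obtain ⟨W, hW, _⟩ := hint k univ isOpen_univ (univ_nonempty)
    exact ⟨W, hW⟩
  have henum := fun k => Set.Countable.exists_eq_range (hcount k) (hDne k)
  choose d hd using henum
  -- the functionals
  set E : ℕ × ℕ × ℕ × Bool → C(K₀, ℝ) → ℝ := fun p f =>
    (cond p.2.2.2 (1:ℝ) (-1)) *
      ((rfun (Λ p.2.1) (d p.1 p.2.2.1) 1)⁻¹ * ext (rfun (Λ p.2.1) (d p.1 p.2.2.1)) f)
    with hEdef
  have hElin : ∀ p, LinBdd (E p) 1 := by
    rintro ⟨k, n, j, b⟩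
    set W := d k j
    set r := rfun (Λ n) W with hrdef
    have hradd : ∀ f g : C(K₀,ℝ), 0 ≤ f → 0 ≤ g → r (f + g) = r f + r g :=
      fun f g hf hg => rfun_add (hΛ n) hf hg
    have hrsmul : ∀ (c : ℝ) (f : C(K₀,ℝ)), 0 ≤ c → 0 ≤ f → r (c • f) = c * r f :=
      fun c f hc hf => rfun_smul (hΛ n) hc hf
    refine ⟨?_, ?_, ?_, by norm_num⟩
    · intro f g
      show (cond b (1:ℝ) (-1)) * ((r 1)⁻¹ * ext r (f + g)) = _
      rw [ext_add hradd]
      show _ = (cond b (1:ℝ) (-1)) * ((r 1)⁻¹ * ext r f)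
        + (cond b (1:ℝ) (-1)) * ((r 1)⁻¹ * ext r g)
      ring
    · intro c f
      show (cond b (1:ℝ) (-1)) * ((r 1)⁻¹ * ext r (c • f)) = _
      rw [ext_smul hrsmul]
      show _ = c * ((cond b (1:ℝ) (-1)) * ((r 1)⁻¹ * ext r f))
      ring
    · intro f
      show |(cond b (1:ℝ) (-1)) * ((r 1)⁻¹ * ext r f)| ≤ 1 * ‖f‖
      rw [abs_mul]
      have hcond : |(cond b (1:ℝ) (-1))| = 1 := by cases b <;> simp
      rw [hcond, one_mul, one_mul, abs_mul]
      have hr1 : 0 ≤ r 1 := rfun_nonneg (hΛ n) (by intro x; simp)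
      rcases eq_or_lt_of_le hr1 with h0 | hpos
      · have hext0 : |ext r f| ≤ 0 := by
          have := ext_abs_le (hΛ n) W f
          rw [hrdef] at *
          rw [← h0] at this
          simpa using this
        have : |ext r f| = 0 := le_antisymm hext0 (abs_nonneg _)
        rw [this, mul_zero]
        exact norm_nonneg f
      · have := ext_abs_le (hΛ n) W f
        rw [abs_of_nonneg (inv_nonneg.mpr hr1)]
        rw [inv_mul_le_iff₀ hpos]
        calc |ext r f| ≤ ‖f‖ * r 1 := this
          _ = r 1 * ‖f‖ := mul_comm _ _
  -- the norming property at index level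
  have hnorming : ∀ f : C(K₀, ℝ), ∀ k : ℕ,
      ∃ p : ℕ × ℕ × ℕ × Bool, (1 - 2 * ε k) * ‖f‖ ≤ E p f := by
    intro f k
    by_cases hf0 : f = 0
    · subst hf0
      refine ⟨(k, 0, 0, true), ?_⟩
      show (1 - 2 * ε k) * ‖(0:C(K₀,ℝ))‖ ≤
        (cond true (1:ℝ) (-1)) * ((rfun (Λ 0) (d k 0) 1)⁻¹ * ext (rfun (Λ 0) (d k 0)) 0)
      rw [ext_zero]
      simp
    · set fh : C(K₀, ℝ) := ‖f‖⁻¹ • f with hfhdef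
      have hfnorm : 0 < ‖f‖ := norm_pos_iff.mpr hf0
      have hfh1 : ‖fh‖ = 1 := by
        rw [hfhdef, norm_smul ‖f‖⁻¹ f, norm_inv, norm_norm,
          inv_mul_cancel₀ (ne_of_gt hfnorm)]
      -- attain the max
      obtain ⟨x0, -, hx0m⟩ := isCompact_univ.exists_isMaxOn Set.univ_nonempty
        ((fh.continuous.abs).continuousOn : ContinuousOn (fun x => |fh x|) Set.univ)
      have hx0max : ∀ y, |fh y| ≤ |fh x0| := fun y => hx0m (Set.mem_univ y)
      have habs : |fh x0| = 1 := by
        apply le_antisymm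
        · rw [← hfh1]; exact ContinuousMap.norm_coe_le_norm fh x0
        · rw [← hfh1]
          rw [ContinuousMap.norm_le _ (abs_nonneg _)]
          intro y
          exact hx0max y
      set h : C(K₀, ℝ) := if 0 ≤ fh x0 then fh else -fh with hhdef
      have hh1 : ‖h‖ = 1 := by
        rw [hhdef]
        split_ifs
        · exact hfh1
        · rw [norm_neg]; exact hfh1
      have hhx0 : h x0 = 1 := by
        rw [hhdef]
        split_ifs with hsign
        · rw [← abs_of_nonneg hsign]; exact habs
        · push_neg at hsign
          show -(fh x0) = 1
          rw [← abs_of_neg hsign]; exact habs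
      obtain ⟨W, hWD, n, hr1pos, hest⟩ := main_estimate hΛ hnorm hc0 (hεpos k) (hεhalf k)
        rfl (hstab k) (hint k) hh1 hhx0
      have hWrange : W ∈ Set.range (d k) := by rw [← hd k]; exact hWD
      obtain ⟨j, hj⟩ := hWrange
      set b : Bool := decide (0 ≤ fh x0) with hbdef
      refine ⟨(k, n, j, b), ?_⟩
      -- E at fh equals (r 1)⁻¹ * ext r h
      have hEfh : E (k, n, j, b) fh
          = (rfun (Λ n) W 1)⁻¹ * ext (rfun (Λ n) W) h := by
        show (cond b (1:ℝ) (-1)) * ((rfun (Λ n) (d k j) 1)⁻¹ * ext (rfun (Λ n) (d k j)) fh)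
          = (rfun (Λ n) W 1)⁻¹ * ext (rfun (Λ n) W) h
        rw [hj, hhdef, hbdef]
        by_cases hsign : 0 ≤ fh x0
        · rw [if_pos hsign]
          have hbt : decide (0 ≤ fh x0) = true := decide_eq_true hsign
          rw [hbt]
          simp only [cond_true]
          ring
        · rw [if_neg hsign]
          have hbf : decide (0 ≤ fh x0) = false := decide_eq_false hsign
          rw [hbf]
          have hneg : ext (rfun (Λ n) W) (-fh) = - ext (rfun (Λ n) W) fh := by
            have hh := ext_smul (fun c f hc hf => rfun_smul (W := W) (hΛ n) hc hf) (-1) fh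
            rw [neg_one_smul] at hh
            rw [hh]
            ring
          rw [hneg]
          simp only [cond_false]
          ring
      have hEh : (1 - 2 * ε k) ≤ E (k, n, j, b) fh := by
        rw [hEfh]
        have step := mul_le_mul_of_nonneg_left hest (le_of_lt (inv_pos.mpr hr1pos))
        have hcancel : (rfun (Λ n) W 1)⁻¹ * ((1 - 2 * ε k) * rfun (Λ n) W 1)
            = 1 - 2 * ε k := by
          field_simp
        rw [hcancel] at step
        exact step
      -- scale back
      have hsmul : E (k, n, j, b) f = ‖f‖ * E (k, n, j, b) fh := by
        have hlin := hElin (k, n, j, b)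
        have h2 : ‖f‖ • fh = f := by
          rw [hfhdef, smul_smul, mul_inv_cancel₀ (ne_of_gt hfnorm), one_smul]
        conv_lhs => rw [← h2]
        exact hlin.smulL ‖f‖ fh
      rw [hsmul]
      calc (1 - 2 * ε k) * ‖f‖ = ‖f‖ * (1 - 2 * ε k) := mul_comm _ _
        _ ≤ ‖f‖ * E (k, n, j, b) fh := mul_le_mul_of_nonneg_left hEh (norm_nonneg f)
  -- enumerate
  obtain ⟨σ, hσ⟩ := exists_surjective_nat (ℕ × ℕ × ℕ × Bool)
  refine ⟨E ∘ σ, fun i => hElin (σ i), ?_⟩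
  intro f k
  obtain ⟨p, hp⟩ := hnorming f k
  obtain ⟨i, hi⟩ := hσ p
  refine ⟨i, ?_⟩
  show (1 - 2 / ((k:ℝ) + 2)) * ‖f‖ ≤ E (σ i) f
  rw [hi]
  have : 2 / ((k:ℝ) + 2) = 2 * ε k := by
    rw [hεdef]; ring
  rw [this]
  exact hp

end Norming

end Tal

namespace Tal

/-- purely arithmetic helper for the supremum lower bound -/
lemma sup_ge_of_norming (S nf : ℝ) (hnf : 0 ≤ nf)
    (h : ∀ m : ℕ, ∃ v : ℝ, v ≤ S ∧ (1 - 2 / ((m:ℝ) + 2)) * nf ≤ v) : nf ≤ S := by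
  apply le_of_forall_pos_le_add
  intro εr hεr
  obtain ⟨m, hm⟩ := exists_nat_ge (2 * nf / εr)
  obtain ⟨v, hvS, hv⟩ := h m
  have h2 : 2 / ((m:ℝ) + 2) * nf ≤ εr := by
    have hm2 : (0:ℝ) < (m:ℝ) + 2 := by positivity
    rw [div_mul_eq_mul_div, div_le_iff₀ hm2]
    have h3 : 2 * nf ≤ εr * m := by
      rw [div_le_iff₀ hεr] at hm
      linarith
    nlinarith
  calc nf = (1 - 2 / ((m:ℝ) + 2)) * nf + 2 / ((m:ℝ) + 2) * nf := by ring
    _ ≤ v + εr := add_le_add hv h2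
    _ ≤ S + εr := by linarith

end Tal

abbrev LinfNat := lp (fun _ : ℕ => ℝ) ⊤

/-- Talagrand: `C(K)` embeds isomorphically into `ℓ∞` iff it embeds isometrically. -/
theorem embeds_iff_embeds_isometrically (K : Type*) [TopologicalSpace K]
    [CompactSpace K] [T2Space K] :
    (∃ T : C(K, ℝ) →L[ℝ] LinfNat, Function.Injective T ∧ IsClosed (Set.range T)) ↔
      Nonempty (C(K, ℝ) →ₗᵢ[ℝ] LinfNat) := by
  constructor
  · rintro ⟨T, hTinj, hTclosed⟩
    by_cases hKe : Nonempty K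
    swap
    · rw [not_nonempty_iff] at hKe
      have hzero : ∀ f : C(K, ℝ), f = 0 := fun f => by
        ext x; exact (hKe.false x).elim
      refine ⟨{ toLinearMap := 0, norm_map' := ?_ }⟩
      intro f
      rw [hzero f]
      simp
    · haveI := hKe
      -- Step 1: T is bounded below
      set p : Submodule ℝ LinfNat := LinearMap.range (T : C(K, ℝ) →ₗ[ℝ] LinfNat) with hp
      have hpclosed : IsClosed (p : Set LinfNat) := by
        rw [hp, LinearMap.coe_range]; exact hTclosed
      haveI : CompleteSpace p := hpclosed.completeSpace_coe
      set Tr : C(K, ℝ) →L[ℝ] p :=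
        T.codRestrict p (fun f => LinearMap.mem_range_self (T : C(K, ℝ) →ₗ[ℝ] LinfNat) f) with hTr
      have hTrinj : Function.Injective Tr := by
        intro a b hab
        apply hTinj
        exact congrArg Subtype.val hab
      have hTrsurj : Function.Surjective Tr := by
        rintro ⟨y, hy⟩
        obtain ⟨x, rfl⟩ := hy
        exact ⟨x, rfl⟩
      have hker : LinearMap.ker (Tr : C(K, ℝ) →ₗ[ℝ] p) = ⊥ := by
        rw [LinearMap.ker_eq_bot']
        intro m hm
        apply hTrinj
        rw [map_zero]; exact hm
      have hrange : LinearMap.range (Tr : C(K, ℝ) →ₗ[ℝ] p) = ⊤ := by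
        rw [LinearMap.range_eq_top]
        exact hTrsurj
      set e := ContinuousLinearEquiv.ofBijective Tr hker hrange with he
      obtain ⟨C, hC⟩ : ∃ C : NNReal, AntilipschitzWith C Tr := ⟨_, e.antilipschitz⟩
      set c0 : ℝ := ((C : ℝ) + 1)⁻¹ with hc0def
      have hc0 : 0 < c0 := by positivity
      have hlower : ∀ f : C(K, ℝ), c0 * ‖f‖ ≤ ‖T f‖ := by
        intro f
        have h1 : ‖f‖ ≤ (C : ℝ) * ‖Tr f‖ := Tr.bound_of_antilipschitz hC f
        have h2 : ‖Tr f‖ = ‖T f‖ := rfl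
        rw [h2] at h1
        rw [hc0def, inv_mul_le_iff₀ (by positivity)]
        have hCnn : (0:ℝ) ≤ (C:ℝ) := C.coe_nonneg
        nlinarith [norm_nonneg (T f)]
      -- Step 2: the coordinate functionals and their moduli
      set M : ℝ := ‖T‖ with hM
      set φ : ℕ → C(K, ℝ) → ℝ := fun n f => (T f : ∀ _ : ℕ, ℝ) n with hφ
      have hφlin : ∀ n, Tal.LinBdd (φ n) M := by
        intro n
        refine ⟨?_, ?_, ?_, norm_nonneg T⟩
        · intro f g
          show (T (f + g) : ∀ _ : ℕ, ℝ) n = _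
          rw [map_add, lp.coeFn_add]
          rfl
        · intro c f
          show (T (c • f) : ∀ _ : ℕ, ℝ) n = _
          rw [map_smul, lp.coeFn_smul]
          rfl
        · intro f
          calc |φ n f| = ‖(T f : ∀ _ : ℕ, ℝ) n‖ := rfl
            _ ≤ ‖T f‖ := lp.norm_apply_le_norm ENNReal.top_ne_zero (T f) n
            _ ≤ ‖T‖ * ‖f‖ := T.le_opNorm f
      set Λ : ℕ → C(K, ℝ) → ℝ := fun n => Tal.qfun (φ n) with hΛdef
      have hΛ : ∀ n, Tal.Cone (Λ n) M := fun n => Tal.qfun_cone (hφlin n)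
      -- Step 3: the norming property of mV
      have hnorm : ∀ V : Set K, IsOpen V → V.Nonempty → c0 ≤ Tal.mV Λ V := by
        rintro V hV ⟨x0, hx0⟩
        obtain ⟨f0, hf0s, hf0t, hf0icc⟩ := exists_continuous_zero_one_of_isClosed
          (isClosed_compl_iff.mpr hV) isClosed_singleton
          (Set.disjoint_singleton_right.mpr (by simpa using hx0))
        have hf0G : f0 ∈ Tal.G V := by
          refine ⟨fun x => (hf0icc x).1, fun x => (hf0icc x).2, fun x hx => ?_⟩
          by_contra hxV
          exact hx (by simpa using hf0s (by simpa using hxV))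
        have hf0x0 : f0 x0 = 1 := by
          simpa using hf0t (Set.mem_singleton x0)
        have hf0norm : ‖f0‖ = 1 := by
          apply le_antisymm
          · rw [ContinuousMap.norm_le _ (by norm_num)]
            intro x
            rw [Real.norm_eq_abs, abs_le]
            exact ⟨by linarith [(hf0icc x).1], (hf0icc x).2⟩
          · calc (1:ℝ) = |f0 x0| := by rw [hf0x0]; norm_num
              _ ≤ ‖f0‖ := ContinuousMap.norm_coe_le_norm f0 x0
        have hTf0 : c0 ≤ ‖T f0‖ := by
          have := hlower f0
          rwa [hf0norm, mul_one] at this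
        have hf0nn : (0 : C(K,ℝ)) ≤ f0 := by
          rw [ContinuousMap.le_def]; intro x; simpa using (hf0icc x).1
        have hsup : ‖T f0‖ ≤ Tal.mV Λ V := by
          rw [lp.norm_eq_ciSup]
          apply ciSup_le
          intro n
          calc ‖(T f0 : ∀ _ : ℕ, ℝ) n‖ = |φ n f0| := rfl
            _ ≤ Λ n f0 := Tal.abs_le_qfun (hφlin n) hf0nn
            _ ≤ Tal.rfun (Λ n) V 1 := Tal.rfun_one_elem (hΛ n) hf0G
            _ ≤ Tal.mV Λ V := Tal.rfun_le_mV hΛ V n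
        linarith
      -- Step 4: countable norming family
      obtain ⟨ef, hebdd, henorm⟩ := Tal.exists_norming hKe hΛ hnorm hc0
      have hbdd1 : ∀ (f : C(K,ℝ)) (i : ℕ), |ef i f| ≤ ‖f‖ := fun f i => by
        have := (hebdd i).bddL f; rwa [one_mul] at this
      have hmem : ∀ f : C(K,ℝ), Memℓp (fun i => ef i f) ⊤ := by
        intro f
        apply memℓp_infty
        refine ⟨‖f‖, ?_⟩
        rintro y ⟨i, rfl⟩
        exact hbdd1 f i
      -- Step 5: build the isometry
      refine ⟨{ toFun := fun f => (⟨fun i => ef i f, hmem f⟩ : LinfNat),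
                map_add' := ?_, map_smul' := ?_, norm_map' := ?_ }⟩
      · intro f g
        apply lp.ext
        rw [lp.coeFn_add]
        funext i
        show ef i (f + g) = ef i f + ef i g
        exact (hebdd i).addL f g
      · intro c f
        apply lp.ext
        rw [lp.coeFn_smul]
        funext i
        show ef i (c • f) = c • ef i f
        rw [smul_eq_mul]
        exact (hebdd i).smulL c f
      · intro f
        show ‖(⟨fun i => ef i f, hmem f⟩ : LinfNat)‖ = ‖f‖
        rw [lp.norm_eq_ciSup]
        have hcoe : ∀ i : ℕ, (⟨fun i => ef i f, hmem f⟩ : LinfNat) i = ef i f :=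
          fun i => rfl
        have hgoal : (⨆ i, ‖(⟨fun i => ef i f, hmem f⟩ : LinfNat) i‖)
            = ⨆ i, |ef i f| :=
          iSup_congr fun i => by simp only [hcoe i, Real.norm_eq_abs]
        rw [hgoal]
        apply le_antisymm
        · exact ciSup_le fun i => hbdd1 f i
        · apply Tal.sup_ge_of_norming _ _ (norm_nonneg f)
          intro m
          obtain ⟨i, hi⟩ := henorm f m
          have habdd : BddAbove (Set.range fun i => |ef i f|) :=
            ⟨‖f‖, by rintro y ⟨i, rfl⟩; exact hbdd1 f i⟩
          exact ⟨|ef i f|, le_ciSup habdd i, le_trans hi (le_abs_self _)⟩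
  · rintro ⟨J⟩
    refine ⟨J.toContinuousLinearMap, ?_, ?_⟩
    · exact J.injective
    · exact (J.isometry.isClosedEmbedding).isClosed_range

end
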